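/- Let f : ℝ^{d_x} × ℝ^{d_u} → ℝ^{d_x}, h : ℝ^{d_x} × ℝ^{d_u} → ℝ^{d_y}, s : ℝ^{d_ω} → ℝ^{d_ω}, and g : ℝ^{d_ω} → ℝ^{d_u} be continuous. Suppose u(t) = g(ω(t)) where ω : [0, ∞) → ℝ^{d_ω} is differentiable with ω̇(t) = s(ω(t)). Let D be a real d_z × d_z matrix and F a real d_z × (d_y + d_u) matrix, let A ⊆ ℝ^{d_x} × ℝ^{d_ω}, and suppose T : ℝ^{d_x} × ℝ^{d_ω} → ℝ^{d_z} is differentiable and satisfies, for every (x, ω) ∈ A, that the derivative of T at (x, ω) applied to the vector (f(x, g(ω)), s(ω)) equals D T(x, ω) + F (h(x, g(ω)), g(ω)). Let x : [0, ∞) → ℝ^{d_x} be differentiable with ẋ(t) = f(x(t), u(t)) and (x(t), ω(t)) ∈ A for all t ≥ 0, and let z : [0, ∞) → ℝ^{d_z} be differentiable with ż(t) = D z(t) + F (h(x(t), u(t)), u(t)) for all t ≥ 0. Then the error e(t) := z(t) − T(x(t), ω(t)) satisfies ė(t) = D e(t) for all t ≥ 0, and hence e(t) = exp(tD) e(0);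 in particular, if D is diagonalizable over ℂ with all eigenvalues of real part at most −μ < 0, then ‖e(t)‖ ≤ M e^{−μ t} ‖e(0)‖ for some M ≥ 1 and all t ≥ 0. -/

import Mathlib

open Matrix

/-- The Euclidean norm on `Fin n → ℝ`. -/
noncomputable def euclNorm {n : ℕ} (v : Fin n → ℝ) : ℝ :=
  ‖(WithLp.equiv 2 (Fin n → ℝ)).symm v‖

section KKLuAux

open NormedSpace Polynomial

attribute [local instance] Matrix.linftyOpNormedRing Matrix.linftyOpNormedAlgebra

/-- The bilinear continuous map `(M, v) ↦ M *ᵥ v`. -/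
noncomputable def mulVecCLM (n : ℕ) :
    Matrix (Fin n) (Fin n) ℝ →L[ℝ] (Fin n → ℝ) →L[ℝ] (Fin n → ℝ) :=
  LinearMap.toContinuousLinearMap
  { toFun := fun M => LinearMap.toContinuousLinearMap M.mulVecLin
    map_add' := fun M N => by ext v i; simp [Matrix.mulVecLin_add]
    map_smul' := fun c M => by ext v i; simp [Matrix.smul_mulVec] }

lemma mulVecCLM_apply {n : ℕ} (M : Matrix (Fin n) (Fin n) ℝ) (v : Fin n → ℝ) :
    mulVecCLM n M v = M.mulVec v := rfl

private lemma hasDerivAt_exp_neg_smul {n : ℕ} (D : Matrix (Fin n) (Fin n) ℝ) (t : ℝ) :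
    HasDerivAt (fun t : ℝ => exp ((-t) • D)) (-(exp ((-t) • D) * D)) t := by
  have h1 := hasDerivAt_exp_smul_const (𝕂 := ℝ) D (-t)
  have h2 : HasDerivAt (fun t : ℝ => -t) (-1) t := (hasDerivAt_id t).neg
  have h3 := h1.scomp t h2
  have h4 : HasDerivAt (fun t : ℝ => exp ((-t) • D)) ((-1 : ℝ) • (exp ((-t) • D) * D)) t := h3
  simpa using h4

private lemma ode_exp {n : ℕ} (D : Matrix (Fin n) (Fin n) ℝ) (e : ℝ → Fin n → ℝ)
    (he : ∀ t, 0 ≤ t → HasDerivAt e (D.mulVec (e t)) t) (t : ℝ) (ht : 0 ≤ t) :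
    e t = (exp (t • D)).mulVec (e 0) := by
  set E : ℝ → Matrix (Fin n) (Fin n) ℝ := fun τ => exp ((-τ) • D) with hE
  set w : ℝ → Fin n → ℝ := fun τ => (E τ).mulVec (e τ) with hw
  have hw' : ∀ τ : ℝ, 0 ≤ τ → HasDerivAt w 0 τ := by
    intro τ hτ
    have hEd : HasDerivAt E (-(E τ * D)) τ := hasDerivAt_exp_neg_smul D τ
    have hc : HasDerivAt (fun σ => mulVecCLM n (E σ)) (mulVecCLM n (-(E τ * D))) τ :=
      (mulVecCLM n).hasFDerivAt.comp_hasDerivAt τ hEd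
    have := hc.clm_apply (he τ hτ)
    simp only [mulVecCLM_apply] at this
    refine this.congr_deriv ?_
    rw [Matrix.neg_mulVec, ← Matrix.mulVec_mulVec]
    abel
  have hconst : w t = w 0 := by
    have hcont : ContinuousOn w (Set.Icc 0 t) := fun τ hτ =>
      ((hw' τ hτ.1).continuousAt.continuousWithinAt)
    exact constant_of_has_deriv_right_zero hcont
      (fun τ hτ => ((hw' τ hτ.1).hasDerivWithinAt)) t (Set.mem_Icc.2 ⟨ht, le_refl t⟩)
  have hw0 : w 0 = e 0 := by
    simp [hw, hE, Matrix.one_mulVec]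
  have hunit : exp (t • D) * E t = 1 := by
    rw [hE]
    rw [← Matrix.exp_add_of_commute _ _ (((Commute.refl D).smul_left t).smul_right (-t))]
    simp
  calc e t = (exp (t • D) * E t).mulVec (e t) := by rw [hunit, Matrix.one_mulVec]
    _ = (exp (t • D)).mulVec (w t) := by rw [← Matrix.mulVec_mulVec]
    _ = (exp (t • D)).mulVec (e 0) := by rw [hconst, hw0]

private lemma charpoly_conj_diag {n : ℕ} (P : Matrix (Fin n) (Fin n) ℂ) (d : Fin n → ℂ)
    (hP : IsUnit P) : (P * diagonal d * P⁻¹).charpoly = ∏ i, (X - C (d i)) := by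
  have hPdet : IsUnit P.det := (Matrix.isUnit_iff_isUnit_det P).1 hP
  have hPP : P * P⁻¹ = 1 := Matrix.mul_nonsing_inv P hPdet
  set Cm : ℂ →+* ℂ[X] := Polynomial.C
  have hmap1 : (P.map Cm) * (P⁻¹.map Cm) = 1 := by
    rw [← Matrix.map_mul, hPP, Matrix.map_one Cm Cm.map_zero Cm.map_one]
  have hscalar : ∀ M : Matrix (Fin n) (Fin n) ℂ[X],
      scalar (Fin n) (X : ℂ[X]) * M = M * scalar (Fin n) (X : ℂ[X]) := by
    intro M
    rw [Matrix.scalar_commute]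
    intro r; exact Commute.all _ _
  have hchar : charmatrix (P * diagonal d * P⁻¹) =
      (P.map Cm) * charmatrix (diagonal d) * (P⁻¹.map Cm) := by
    rw [charmatrix, charmatrix]
    simp only [RingHom.mapMatrix_apply]
    rw [Matrix.map_mul, Matrix.map_mul, mul_sub, sub_mul]
    congr 1
    rw [← hscalar, mul_assoc, hmap1, mul_one]
  have hdet : (P * diagonal d * P⁻¹).charpoly = (diagonal d).charpoly := by
    rw [Matrix.charpoly, Matrix.charpoly, hchar, det_mul, det_mul]
    rw [mul_comm (det (P.map Cm)), mul_assoc, ← det_mul, hmap1, det_one, mul_one]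
  rw [hdet, charpoly_of_upperTriangular _ (blockTriangular_diagonal d)]
  simp
  rfl

private lemma mem_roots_conj_diag {n : ℕ} (P : Matrix (Fin n) (Fin n) ℂ) (d : Fin n → ℂ)
    (hP : IsUnit P) (i : Fin n) : d i ∈ (P * diagonal d * P⁻¹).charpoly.roots := by
  rw [Polynomial.mem_roots', charpoly_conj_diag P d hP]
  constructor
  · exact Monic.ne_zero (monic_prod_of_monic _ _ fun j _ => monic_X_sub_C (d j))
  · rw [Polynomial.IsRoot, eval_prod]
    exact Finset.prod_eq_zero (Finset.mem_univ i) (by simp)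

private lemma exp_map_complex {n : ℕ} (D : Matrix (Fin n) (Fin n) ℝ) (t : ℝ) :
    (exp (t • D)).map Complex.ofReal = exp (t • D.map Complex.ofReal) := by
  have hcont : Continuous (Complex.ofRealHom.mapMatrix :
      Matrix (Fin n) (Fin n) ℝ →+* Matrix (Fin n) (Fin n) ℂ) :=
    continuous_id.matrix_map Complex.continuous_ofReal
  have h1 := map_exp (Complex.ofRealHom.mapMatrix (m := Fin n)) hcont (t • D)
  have h2 : (Complex.ofRealHom.mapMatrix (m := Fin n)) (t • D) = t • D.map Complex.ofReal := by
    ext i j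
    simp [Matrix.map_apply]
  have h3 : exp (t • D.map Complex.ofReal) = exp (t • D.map Complex.ofReal) :=
    rfl
  simp only [RingHom.mapMatrix_apply] at h1 h2
  show (exp (t • D)).map ⇑Complex.ofRealHom = _
  rw [← h2]; exact h1

private lemma exp_conj_entry {n : ℕ} (D : Matrix (Fin n) (Fin n) ℝ)
    (P : Matrix (Fin n) (Fin n) ℂ) (d : Fin n → ℂ) (hP : IsUnit P)
    (hD : D.map Complex.ofReal = P * diagonal d * P⁻¹) (t : ℝ) :
    (exp (t • D)).map Complex.ofReal
      = P * diagonal (fun k => Complex.exp (t * d k)) * P⁻¹ := by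
  rw [exp_map_complex, hD]
  have h4 : t • (P * diagonal d * P⁻¹) = P * (t • diagonal d) * P⁻¹ := by
    rw [mul_smul_comm, smul_mul_assoc]
  rw [h4]
  have h5 : (t • diagonal d : Matrix (Fin n) (Fin n) ℂ) = diagonal (fun k => (t : ℂ) * d k) := by
    rw [← Matrix.diagonal_smul]
    congr 1
  have h6 : exp (fun k => (t : ℂ) * d k) = fun k => Complex.exp (t * d k) := by
    funext k
    rw [Pi.coe_exp, ← Complex.exp_eq_exp_ℂ]
  rw [h5, Matrix.exp_conj P _ hP, Matrix.exp_diagonal, h6]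

private lemma euclNorm_eq {n : ℕ} (v : Fin n → ℝ) :
    euclNorm v = Real.sqrt (∑ i, v i ^ 2) := by
  rw [euclNorm, EuclideanSpace.norm_eq]
  congr 1
  refine Finset.sum_congr rfl fun i _ => ?_
  rw [WithLp.equiv_symm_apply, PiLp.toLp_apply, Real.norm_eq_abs, sq_abs]

private lemma euclNorm_nonneg {n : ℕ} (v : Fin n → ℝ) : 0 ≤ euclNorm v := norm_nonneg _

private lemma abs_le_euclNorm {n : ℕ} (v : Fin n → ℝ) (j : Fin n) : |v j| ≤ euclNorm v := by
  rw [euclNorm_eq, ← Real.sqrt_sq_eq_abs]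
  exact Real.sqrt_le_sqrt (Finset.single_le_sum (fun i _ => sq_nonneg (v i)) (Finset.mem_univ j))

private lemma euclNorm_le_bound {n : ℕ} (v : Fin n → ℝ) (B : ℝ) (hB : 0 ≤ B)
    (hv : ∀ i, |v i| ≤ B) : euclNorm v ≤ n * B := by
  rw [euclNorm_eq]
  have h1 : ∑ i, v i ^ 2 ≤ (n : ℝ) * B ^ 2 := by
    calc ∑ i, v i ^ 2 ≤ ∑ _i : Fin n, B ^ 2 := by
          refine Finset.sum_le_sum fun i _ => ?_
          rw [← sq_abs]
          exact pow_le_pow_left₀ (abs_nonneg _) (hv i) 2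
      _ = (n : ℝ) * B ^ 2 := by simp [Finset.card_univ]
  have h2 : (n : ℝ) * B ^ 2 ≤ ((n : ℝ) * B) ^ 2 := by
    have hn : (n : ℝ) ≤ (n : ℝ) ^ 2 := by
      rcases Nat.eq_zero_or_pos n with h | h
      · simp [h]
      · have : (1 : ℝ) ≤ n := by exact_mod_cast h
        nlinarith
    nlinarith [sq_nonneg B]
  calc Real.sqrt (∑ i, v i ^ 2) ≤ Real.sqrt (((n : ℝ) * B) ^ 2) :=
        Real.sqrt_le_sqrt (h1.trans h2)
    _ = (n : ℝ) * B := Real.sqrt_sq (by positivity)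

private lemma conj_diag_entry_bound {n : ℕ} (P : Matrix (Fin n) (Fin n) ℂ) (v : Fin n → ℂ)
    (c : ℝ) (hv : ∀ k, ‖v k‖ ≤ c) (i j : Fin n) :
    ‖(P * diagonal v * P⁻¹) i j‖ ≤
      (∑ i', ∑ j', ∑ k, ‖P i' k‖ * ‖P⁻¹ k j'‖) * c := by
  have hc : 0 ≤ c := le_trans (norm_nonneg _) (hv ⟨0, by
      rcases Nat.eq_zero_or_pos n with h | h
      · exact absurd i.2 (by simp [h])
      · exact h⟩)
  have hentry : (P * diagonal v * P⁻¹) i j = ∑ k, P i k * v k * P⁻¹ k j := by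
    simp only [Matrix.mul_apply, Matrix.mul_diagonal]
    refine Finset.sum_congr rfl fun k _ => ?_
    rw [Finset.sum_eq_single k (fun b _ hb => by rw [Matrix.diagonal_apply_ne _ hb, mul_zero])
      (fun hk => absurd (Finset.mem_univ k) hk)]
    simp
  rw [hentry]
  calc ‖∑ k, P i k * v k * P⁻¹ k j‖
      ≤ ∑ k, ‖P i k * v k * P⁻¹ k j‖ := norm_sum_le _ _
    _ ≤ ∑ k, (‖P i k‖ * ‖P⁻¹ k j‖) * c := by
        refine Finset.sum_le_sum fun k _ => ?_
        rw [norm_mul, norm_mul]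
        calc ‖P i k‖ * ‖v k‖ * ‖P⁻¹ k j‖
            ≤ ‖P i k‖ * c * ‖P⁻¹ k j‖ := by
              exact mul_le_mul_of_nonneg_right
                (mul_le_mul_of_nonneg_left (hv k) (norm_nonneg _))
                (norm_nonneg _)
          _ = (‖P i k‖ * ‖P⁻¹ k j‖) * c := by ring
    _ = (∑ k, ‖P i k‖ * ‖P⁻¹ k j‖) * c := by
        rw [Finset.sum_mul]
    _ ≤ (∑ i', ∑ j', ∑ k, ‖P i' k‖ * ‖P⁻¹ k j'‖) * c := by
        refine mul_le_mul_of_nonneg_right ?_ hc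
        have hstep : (∑ k, ‖P i k‖ * ‖P⁻¹ k j‖)
            ≤ ∑ j', ∑ k, ‖P i k‖ * ‖P⁻¹ k j'‖ := by
          refine Finset.single_le_sum (f := fun j' => ∑ k, ‖P i k‖ *
            ‖P⁻¹ k j'‖) (fun j' _ => ?_) (Finset.mem_univ j)
          positivity
        refine hstep.trans ?_
        refine Finset.single_le_sum (f := fun i' => ∑ j', ∑ k, ‖P i' k‖ *
          ‖P⁻¹ k j'‖) (fun i' _ => ?_) (Finset.mem_univ i)
        positivity

private lemma exp_entry_le {n : ℕ} (D : Matrix (Fin n) (Fin n) ℝ)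
    (P : Matrix (Fin n) (Fin n) ℂ) (d : Fin n → ℂ) (hP : IsUnit P)
    (hD : D.map Complex.ofReal = P * diagonal d * P⁻¹) (μ : ℝ)
    (hd : ∀ i, (d i).re ≤ -μ) (t : ℝ) (ht : 0 ≤ t) (i j : Fin n) :
    |exp (t • D) i j| ≤
      (∑ i', ∑ j', ∑ k, ‖P i' k‖ * ‖P⁻¹ k j'‖) * Real.exp (-μ * t) := by
  have hkey := exp_conj_entry D P d hP hD t
  have h2 : |exp (t • D) i j| = ‖((exp (t • D)).map Complex.ofReal) i j‖ := by
    rw [Matrix.map_apply, Complex.norm_real, Real.norm_eq_abs]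
  rw [h2, hkey]
  refine conj_diag_entry_bound P _ _ (fun k => ?_) i j
  rw [Complex.norm_exp]
  refine Real.exp_le_exp.2 ?_
  have hre : ((t : ℂ) * d k).re = t * (d k).re := by
    simp [Complex.mul_re]
  rw [hre]
  calc t * (d k).re ≤ t * (-μ) := mul_le_mul_of_nonneg_left (hd k) ht
    _ = -μ * t := by ring

end KKLuAux

set_option maxHeartbeats 2000000 in
open NormedSpace in
/-- **Error dynamics of the functional (KKLu) observer.** The input `u = g(ω)` is
generated by the exosystem `ω̇ = s(ω)`; the augmented state `(x, ω)` evolves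
autonomously, the observer `ż = D z + F (y, u)` is driven by the extended output
`(y, u)`, and `T` solves the corresponding PDE on `A`. Then the error
`e(t) = z(t) - T(x(t), ω(t))` satisfies `ė = D e`, hence `e(t) = exp(t D) e(0)`;
in particular, if `D` is diagonalizable over `ℂ` with all eigenvalues of real part
at most `-μ < 0`, then `‖e(t)‖ ≤ M e^{-μ t} ‖e(0)‖` for some `M ≥ 1` and all `t ≥ 0`. -/
theorem kklu_observer_error
    (dx du dy dω dz : ℕ)
    (f : (Fin dx → ℝ) → (Fin du → ℝ) → Fin dx → ℝ)
    (h : (Fin dx → ℝ) → (Fin du → ℝ) → Fin dy → ℝ)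
    (s : (Fin dω → ℝ) → Fin dω → ℝ) (g : (Fin dω → ℝ) → Fin du → ℝ)
    (hf : Continuous fun p : (Fin dx → ℝ) × (Fin du → ℝ) => f p.1 p.2)
    (hh : Continuous fun p : (Fin dx → ℝ) × (Fin du → ℝ) => h p.1 p.2)
    (hs : Continuous s) (hg : Continuous g)
    (ω : ℝ → Fin dω → ℝ) (hω : ∀ t : ℝ, 0 ≤ t → HasDerivAt ω (s (ω t)) t)
    (u : ℝ → Fin du → ℝ) (hu : ∀ t, u t = g (ω t))
    (D : Matrix (Fin dz) (Fin dz) ℝ) (F : Matrix (Fin dz) (Fin dy ⊕ Fin du) ℝ)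
    (A : Set ((Fin dx → ℝ) × (Fin dω → ℝ)))
    (T : (Fin dx → ℝ) × (Fin dω → ℝ) → Fin dz → ℝ) (hT : Differentiable ℝ T)
    (hPDE : ∀ p ∈ A, fderiv ℝ T p (f p.1 (g p.2), s p.2) =
        D.mulVec (T p) + F.mulVec (Sum.elim (h p.1 (g p.2)) (g p.2)))
    (x : ℝ → Fin dx → ℝ) (hx : ∀ t : ℝ, 0 ≤ t → HasDerivAt x (f (x t) (u t)) t)
    (hxA : ∀ t : ℝ, 0 ≤ t → (x t, ω t) ∈ A)
    (z : ℝ → Fin dz → ℝ)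
    (hz : ∀ t : ℝ, 0 ≤ t →
        HasDerivAt z (D.mulVec (z t) + F.mulVec (Sum.elim (h (x t) (u t)) (u t))) t)
    (e : ℝ → Fin dz → ℝ) (he : ∀ t, e t = z t - T (x t, ω t)) :
    (∀ t : ℝ, 0 ≤ t → HasDerivAt e (D.mulVec (e t)) t) ∧
    (∀ t : ℝ, 0 ≤ t → e t = (NormedSpace.exp (t • D)).mulVec (e 0)) ∧
    (∀ μ : ℝ, 0 < μ →
      (∃ (P : Matrix (Fin dz) (Fin dz) ℂ) (d : Fin dz → ℂ),
          IsUnit P ∧ D.map Complex.ofReal = P * Matrix.diagonal d * P⁻¹) →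
      (∀ lam ∈ (D.map Complex.ofReal).charpoly.roots, lam.re ≤ -μ) →
      ∃ M : ℝ, 1 ≤ M ∧ ∀ t : ℝ, 0 ≤ t →
        euclNorm (e t) ≤ M * Real.exp (-μ * t) * euclNorm (e 0)) := by
  have part1 : ∀ t : ℝ, 0 ≤ t → HasDerivAt e (D.mulVec (e t)) t := by
    intro t ht
    have hp : HasDerivAt (fun τ => (x τ, ω τ)) (f (x t) (u t), s (ω t)) t :=
      (hx t ht).prodMk (hω t ht)
    have hTd : HasDerivAt (fun τ => T (x τ, ω τ))
        (fderiv ℝ T (x t, ω t) (f (x t) (u t), s (ω t))) t :=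
      (hT (x t, ω t)).hasFDerivAt.comp_hasDerivAt t hp
    have hval : fderiv ℝ T (x t, ω t) (f (x t) (u t), s (ω t)) =
        D.mulVec (T (x t, ω t)) + F.mulVec (Sum.elim (h (x t) (u t)) (u t)) := by
      rw [hu t]
      exact hPDE (x t, ω t) (hxA t ht)
    rw [hval] at hTd
    have hE : HasDerivAt (fun τ => z τ - T (x τ, ω τ))
        ((D.mulVec (z t) + F.mulVec (Sum.elim (h (x t) (u t)) (u t))) -
          (D.mulVec (T (x t, ω t)) + F.mulVec (Sum.elim (h (x t) (u t)) (u t)))) t :=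
      (hz t ht).sub hTd
    have heq : e = fun τ => z τ - T (x τ, ω τ) := funext he
    rw [heq]
    convert hE using 1
    show D *ᵥ (z t - T (x t, ω t)) = _
    rw [Matrix.mulVec_sub]
    abel
  have part2 : ∀ t : ℝ, 0 ≤ t → e t = (exp (t • D)).mulVec (e 0) :=
    fun t ht => ode_exp D e part1 t ht
  refine ⟨part1, part2, ?_⟩
  rintro μ hμ ⟨P, d, hP, hD⟩ hroots
  set C : ℝ := ∑ i', ∑ j', ∑ k, ‖P i' k‖ * ‖P⁻¹ k j'‖ with hC
  have hC0 : 0 ≤ C := by positivity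
  have hd : ∀ i, (d i).re ≤ -μ := fun i =>
    hroots (d i) (by rw [hD]; exact mem_roots_conj_diag P d hP i)
  refine ⟨max 1 ((dz : ℝ) ^ 2 * C), le_max_left _ _, fun t ht => ?_⟩
  have heq := part2 t ht
  have hentry : ∀ i j, |exp (t • D) i j| ≤ C * Real.exp (-μ * t) := fun i j => by
    have := exp_entry_le D P d hP hD μ hd t ht i j
    rw [← hC] at this
    exact this
  have hN0 : 0 ≤ euclNorm (e 0) := euclNorm_nonneg _
  have hexp0 : (0 : ℝ) ≤ Real.exp (-μ * t) := (Real.exp_pos _).le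
  have hei : ∀ i, |e t i| ≤ (dz : ℝ) * (C * Real.exp (-μ * t) * euclNorm (e 0)) := by
    intro i
    rw [heq]
    have hmv : (exp (t • D)).mulVec (e 0) i = ∑ j, exp (t • D) i j * e 0 j := by
      simp [Matrix.mulVec, dotProduct]
    rw [hmv]
    calc |∑ j, exp (t • D) i j * e 0 j|
        ≤ ∑ j, |exp (t • D) i j * e 0 j| := Finset.abs_sum_le_sum_abs _ _
      _ ≤ ∑ _j : Fin dz, C * Real.exp (-μ * t) * euclNorm (e 0) := by
          refine Finset.sum_le_sum fun j _ => ?_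
          rw [abs_mul]
          exact mul_le_mul (hentry i j) (abs_le_euclNorm _ j) (abs_nonneg _)
            (by positivity)
      _ = (dz : ℝ) * (C * Real.exp (-μ * t) * euclNorm (e 0)) := by
          simp [Finset.card_univ]
  have hbound := euclNorm_le_bound (e t) _ (by positivity) hei
  calc euclNorm (e t)
      ≤ (dz : ℝ) * ((dz : ℝ) * (C * Real.exp (-μ * t) * euclNorm (e 0))) := hbound
    _ = ((dz : ℝ) ^ 2 * C) * Real.exp (-μ * t) * euclNorm (e 0) := by ring
    _ ≤ max 1 ((dz : ℝ) ^ 2 * C) * Real.exp (-μ * t) * euclNorm (e 0) := by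
        have := le_max_right (1 : ℝ) ((dz : ℝ) ^ 2 * C)
        have h1 : ((dz : ℝ) ^ 2 * C) * Real.exp (-μ * t) ≤
            max 1 ((dz : ℝ) ^ 2 * C) * Real.exp (-μ * t) :=
          mul_le_mul_of_nonneg_right this hexp0
        exact mul_le_mul_of_nonneg_right h1 hN0
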